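/- arXiv:1911.11038 — 7 statements merged into one kernel-verified Lean document; each statement's English description precedes it below -/
import Mathlib

section
/- Let n ≥ 1 and 0 < r < n. The number of maximal NE-paths in the shifted Ferrers diagram of the RevLex segment of size C(n,2)+r (the diagram consisting of all boxes (a,b) with 1 ≤ a ≤ b ≤ n except the boxes (a,n) with a > r) equals 2^(n-1) − 2^(n-r-1). -/
/-- A single north (row decreases by 1) or east (column increases by 1) step. -/
def NEStep (p q : ℕ × ℕ) : Prop :=
  (q.1 + 1 = p.1 ∧ q.2 = p.2) ∨ (q.1 = p.1 ∧ q.2 = p.2 + 1)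

/-- `l` is an NE-lattice path from `s` to `t` all of whose boxes lie in the diagram `D`. -/
def IsNEPathIn (D : Set (ℕ × ℕ)) (s t : ℕ × ℕ) (l : List (ℕ × ℕ)) : Prop :=
  l.Chain' NEStep ∧ l.head? = some s ∧ l.getLast? = some t ∧ ∀ b ∈ l, b ∈ D

/-- The shifted staircase diagram on `n` columns. -/
def staircase (n : ℕ) : Set (ℕ × ℕ) := {p | 1 ≤ p.1 ∧ p.1 ≤ p.2 ∧ p.2 ≤ n}

/-- The number of maximal NE-paths in the diagram `D` on `n` columns, i.e. NE-paths from
some diagonal box `(i,i)` to the top-right box `(1,n)`, staying inside `D`. -/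
noncomputable def numMaxPaths (D : Set (ℕ × ℕ)) (n : ℕ) : ℕ :=
  Nat.card {l : List (ℕ × ℕ) // ∃ i, IsNEPathIn D (i, i) (1, n) l}

/-- `D` is the diagram of a strongly stable set of quadratic monomials in `n` variables. -/
def StronglyStableIn (n : ℕ) (D : Set (ℕ × ℕ)) : Prop :=
  D ⊆ staircase n ∧
    ∀ a b a' b' : ℕ, (a, b) ∈ D → 1 ≤ a' → a' ≤ a → a' ≤ b' → b' ≤ b → (a', b') ∈ D

/-! ### Auxiliary machinery: encoding reversed paths by boolean words -/

/-- One reverse step: `true` increases the row, `false` decreases the column. -/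
def stepPt (p : ℕ × ℕ) : Bool → ℕ × ℕ
  | true => (p.1 + 1, p.2)
  | false => (p.1, p.2 - 1)

/-- The reversed path starting at `p` determined by the word `w`. -/
def revPath : ℕ × ℕ → List Bool → List (ℕ × ℕ)
  | p, [] => [p]
  | p, b :: w => p :: revPath (stepPt p b) w

/-- The endpoint of the reversed path. -/
def endPt : ℕ × ℕ → List Bool → ℕ × ℕ
  | p, [] => p
  | p, b :: w => endPt (stepPt p b) w

/-- Number of leading `true`s of a word. -/
def leadTT : List Bool → ℕ
  | [] => 0
  | true :: w => leadTT w + 1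
  | false :: _ => 0

lemma revPath_ne_nil (p : ℕ × ℕ) (w : List Bool) : revPath p w ≠ [] := by
  cases w <;> simp [revPath]

lemma head?_revPath (p : ℕ × ℕ) (w : List Bool) : (revPath p w).head? = some p := by
  cases w <;> simp [revPath]

lemma self_mem_revPath (p : ℕ × ℕ) (w : List Bool) : p ∈ revPath p w := by
  cases w <;> simp [revPath]

lemma getLast?_revPath (p : ℕ × ℕ) (w : List Bool) :
    (revPath p w).getLast? = some (endPt p w) := by
  induction w generalizing p with
  | nil => simp [revPath, endPt]
  | cons b w ih =>
    rw [revPath]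
    cases h : revPath (stepPt p b) w with
    | nil => exact absurd h (revPath_ne_nil _ _)
    | cons x t =>
      rw [List.getLast?_cons_cons, ← h, ih]
      rfl

lemma length_revPath (p : ℕ × ℕ) (w : List Bool) :
    (revPath p w).length = w.length + 1 := by
  induction w generalizing p with
  | nil => simp [revPath]
  | cons b w ih => simp [revPath, ih]

lemma chain'_revPath (p : ℕ × ℕ) (w : List Bool)
    (h : ∀ x ∈ revPath p w, 1 ≤ x.2) :
    (revPath p w).Chain' (fun a b => NEStep b a) := by
  induction w generalizing p with
  | nil => simp [revPath, List.Chain']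
  | cons b w ih =>
    rw [revPath]
    refine List.isChain_cons.2 ⟨?_, ih _ fun x hx => h x (by rw [revPath]; exact List.mem_cons_of_mem _ hx)⟩
    intro q hq
    rw [head?_revPath] at hq
    have hq' : q = stepPt p b := by cases hq; rfl
    subst hq'
    cases b with
    | true => exact Or.inl ⟨rfl, rfl⟩
    | false =>
      refine Or.inr ⟨rfl, ?_⟩
      have hp : 1 ≤ p.2 := h p (self_mem_revPath _ _)
      show p.2 = p.2 - 1 + 1
      omega

lemma revPath_inj : ∀ (w w' : List Bool) (p : ℕ × ℕ),
    revPath p w = revPath p w' → w = w'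
  | [], [], _, _ => rfl
  | [], b :: w', p, h => by
    rw [revPath, revPath] at h
    injection h with h1 h2
    exact absurd h2.symm (revPath_ne_nil _ _)
  | b :: w, [], p, h => by
    rw [revPath, revPath] at h
    injection h with h1 h2
    exact absurd h2 (revPath_ne_nil _ _)
  | b :: w, b' :: w', p, h => by
    rw [revPath, revPath] at h
    injection h with h1 h2
    have hq : stepPt p b = stepPt p b' := by
      have := congrArg List.head? h2
      rw [head?_revPath, head?_revPath] at this
      exact Option.some.inj this
    have hb : b = b' := by
      cases b <;> cases b' <;> simp_all [stepPt, Prod.ext_iff]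
    subst hb
    rw [revPath_inj w w' _ (hq ▸ h2)]

lemma exists_word : ∀ (m : List (ℕ × ℕ)), m.Chain' (fun a b => NEStep b a) →
    ∀ p, m.head? = some p → ∃ w, m = revPath p w
  | [], _, p, h => by simp at h
  | [x], _, p, h => by
    simp at h
    subst h
    exact ⟨[], rfl⟩
  | x :: y :: t, hc, p, h => by
    simp at h
    subst h
    have hc1 : NEStep y x := (List.isChain_cons_cons.1 hc).1
    have hc2 := (List.isChain_cons_cons.1 hc).2
    obtain ⟨w, hw⟩ := exists_word (y :: t) hc2 y rfl
    rcases hc1 with ⟨h1, h2⟩ | ⟨h1, h2⟩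
    · have hy : stepPt x true = y := by
        show (x.1 + 1, x.2) = y
        exact Prod.ext h1 h2
      exact ⟨true :: w, by rw [revPath, hy, ← hw]⟩
    · have hy : stepPt x false = y := by
        show (x.1, x.2 - 1) = y
        have : x.2 - 1 = y.2 := by omega
        exact Prod.ext h1 this
      exact ⟨false :: w, by rw [revPath, hy, ← hw]⟩

lemma take_eq_replicate_of_le_leadTT : ∀ (r : ℕ) (w : List Bool),
    r ≤ leadTT w → w.take r = List.replicate r true
  | 0, _, _ => by simp
  | (r+1), [], h => by simp [leadTT] at h
  | (r+1), false :: w, h => by simp [leadTT] at h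
  | (r+1), true :: w, h => by
    rw [leadTT] at h
    rw [List.take_succ_cons, List.replicate_succ,
      take_eq_replicate_of_le_leadTT r w (by omega)]

lemma endPt_mem : ∀ (u v : List Bool) (p : ℕ × ℕ), endPt p u ∈ revPath p (u ++ v)
  | [], v, p => by rw [endPt]; exact self_mem_revPath p v
  | b :: u, v, p => by
    rw [List.cons_append, revPath, endPt]
    exact List.mem_cons_of_mem _ (endPt_mem u v (stepPt p b))

lemma endPt_replicate (k : ℕ) (p : ℕ × ℕ) :
    endPt p (List.replicate k true) = (p.1 + k, p.2) := by
  induction k generalizing p with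
  | zero => simp [endPt]
  | succ k ih =>
    rw [List.replicate_succ, endPt, ih]
    exact Prod.ext (by show p.1 + 1 + k = p.1 + (k + 1); omega) rfl

lemma endPt_sum (w : List Bool) (p : ℕ × ℕ) (h : ∀ x ∈ revPath p w, 1 ≤ x.2) :
    (endPt p w).1 + p.2 = p.1 + (endPt p w).2 + w.length := by
  induction w generalizing p with
  | nil => simp [endPt]
  | cons b w ih =>
    have hp : 1 ≤ p.2 := h p (self_mem_revPath _ _)
    have ih' := ih (stepPt p b) (fun x hx => h x (by rw [revPath]; exact List.mem_cons_of_mem _ hx))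
    rw [endPt]
    cases b with
    | true =>
      have : stepPt p true = (p.1 + 1, p.2) := rfl
      rw [this] at ih' ⊢
      simp only [List.length_cons]
      omega
    | false =>
      have : stepPt p false = (p.1, p.2 - 1) := rfl
      rw [this] at ih' ⊢
      simp only [List.length_cons]
      omega

lemma mem_revPath_D (n r : ℕ) : ∀ (w : List Bool) (p : ℕ × ℕ),
    1 ≤ p.1 → p.1 + w.length ≤ p.2 → p.2 ≤ n → (p.2 = n → p.1 + leadTT w ≤ r) →
    ∀ x ∈ revPath p w, x ∈ staircase n \ {q : ℕ × ℕ | q.2 = n ∧ r < q.1}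
  | [], p, h1, h2, h3, h4 => by
    intro x hx
    rw [revPath, List.mem_singleton] at hx
    subst hx
    refine ⟨⟨h1, by simpa using h2, h3⟩, ?_⟩
    rintro ⟨he, hlt⟩
    have := h4 he
    rw [leadTT] at this
    omega
  | b :: w, p, h1, h2, h3, h4 => by
    intro x hx
    rw [revPath, List.mem_cons] at hx
    rcases hx with rfl | hx
    · refine ⟨⟨h1, by simp at h2; omega, h3⟩, ?_⟩
      rintro ⟨he, hlt⟩
      have := h4 he
      cases b <;> rw [leadTT] at this <;> omega
    · simp only [List.length_cons] at h2
      cases b with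
      | true =>
        refine mem_revPath_D n r w (p.1 + 1, p.2) (by omega) (by simp; omega) h3 ?_ x hx
        intro he
        have := h4 he
        rw [leadTT] at this
        simpa using by omega
      | false =>
        refine mem_revPath_D n r w (p.1, p.2 - 1) h1 (by simp; omega) (by simp; omega) ?_ x hx
        intro he
        exfalso
        simp at he
        omega

lemma forward (n r : ℕ) (hn : 1 ≤ n) (hr : 0 < r) (hrn : r < n) (w : List Bool)
    (hlen : w.length = n - 1) (hP : w.take r ≠ List.replicate r true) :
    ∃ i, IsNEPathIn (staircase n \ {p : ℕ × ℕ | p.2 = n ∧ r < p.1}) (i, i) (1, n)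
      ((revPath (1, n) w).reverse) := by
  have hlead : leadTT w < r := by
    by_contra hcon
    exact hP (take_eq_replicate_of_le_leadTT r w (by omega))
  have hmem : ∀ x ∈ revPath (1, n) w,
      x ∈ staircase n \ {p : ℕ × ℕ | p.2 = n ∧ r < p.1} := by
    refine mem_revPath_D n r w (1, n) le_rfl ?_ le_rfl (fun _ => ?_)
    · show 1 + w.length ≤ n; omega
    · show 1 + leadTT w ≤ r; omega
  have hcol : ∀ x ∈ revPath (1, n) w, 1 ≤ x.2 := fun x hx =>
    le_trans (hmem x hx).1.1 (hmem x hx).1.2.1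
  have hsum : (endPt (1, n) w).1 + n = 1 + (endPt (1, n) w).2 + w.length :=
    endPt_sum w (1, n) hcol
  have hee : endPt (1, n) w = ((endPt (1, n) w).1, (endPt (1, n) w).1) := by
    have : (endPt (1, n) w).2 = (endPt (1, n) w).1 := by omega
    exact Prod.ext rfl this
  refine ⟨(endPt (1, n) w).1, ?_, ?_, ?_, ?_⟩
  · rw [List.Chain', List.isChain_reverse]
    exact chain'_revPath _ _ hcol
  · rw [List.head?_reverse, getLast?_revPath, ← hee]
  · rw [List.getLast?_reverse, head?_revPath]
  · intro b hb
    exact hmem b (List.mem_reverse.1 hb)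

lemma backward (n r : ℕ) (hn : 1 ≤ n) (hr : 0 < r) (hrn : r < n)
    (l : List (ℕ × ℕ)) (i : ℕ)
    (h : IsNEPathIn (staircase n \ {p : ℕ × ℕ | p.2 = n ∧ r < p.1}) (i, i) (1, n) l) :
    ∃ w : List Bool, w.length = n - 1 ∧ w.take r ≠ List.replicate r true ∧
      l = (revPath (1, n) w).reverse := by
  obtain ⟨hchain, hhead, hlast, hmem⟩ := h
  have hchain' : (l.reverse).Chain' (fun a b => NEStep b a) := by
    rw [List.Chain', List.isChain_reverse]
    exact hchain
  obtain ⟨w, hw⟩ := exists_word l.reverse hchain' (1, n)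
    (by rw [List.head?_reverse]; exact hlast)
  have hl : l = (revPath (1, n) w).reverse := by rw [← hw, List.reverse_reverse]
  have hmem' : ∀ x ∈ revPath (1, n) w,
      x ∈ staircase n \ {p : ℕ × ℕ | p.2 = n ∧ r < p.1} := fun x hx =>
    hmem x (by rw [hl]; exact List.mem_reverse.2 hx)
  have hcol : ∀ x ∈ revPath (1, n) w, 1 ≤ x.2 := fun x hx =>
    le_trans (hmem' x hx).1.1 (hmem' x hx).1.2.1
  have hend : endPt (1, n) w = (i, i) := by
    have h5 := getLast?_revPath (1, n) w
    rw [← hw, List.getLast?_reverse, hhead] at h5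
    exact (Option.some.inj h5).symm
  have hsum : (endPt (1, n) w).1 + n = 1 + (endPt (1, n) w).2 + w.length :=
    endPt_sum w (1, n) hcol
  rw [hend] at hsum
  simp only at hsum
  refine ⟨w, by omega, ?_, hl⟩
  intro hrep
  have hmm : ((1 : ℕ) + r, n) ∈ revPath (1, n) w := by
    have h1 := endPt_mem (w.take r) (w.drop r) (1, n)
    rw [List.take_append_drop, hrep, endPt_replicate] at h1
    exact h1
  exact (hmem' _ hmm).2 ⟨rfl, by omega⟩

lemma take_replicate_iff (r : ℕ) (w : List Bool) (hw : r ≤ w.length) :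
    w.take r = List.replicate r true ↔ ∀ j, j < r → w[j]? = some true := by
  constructor
  · intro h j hj
    have h2 : (w.take r)[j]? = (List.replicate r true)[j]? := by rw [h]
    rwa [List.getElem?_take, List.getElem?_replicate, if_pos hj, if_pos hj] at h2
  · intro h
    apply List.ext_getElem?
    intro j
    by_cases hj : j < r
    · rw [List.getElem?_take, if_pos hj, List.getElem?_replicate, if_pos hj, h j hj]
    · rw [List.getElem?_eq_none, List.getElem?_eq_none]
      · simp [List.length_replicate]; omega
      · simp [List.length_take]; omega

lemma count_words (n r : ℕ) (hn : 1 ≤ n) (hr : 0 < r) (hrn : r < n) :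
    Nat.card {w : List Bool // w.length = n - 1 ∧ w.take r ≠ List.replicate r true}
      = 2 ^ (n - 1) - 2 ^ (n - r - 1) := by
  classical
  have hrm : r ≤ n - 1 := by omega
  have e1 : {w : List Bool // w.length = n - 1 ∧ w.take r ≠ List.replicate r true}
      ≃ {f : Fin (n - 1) → Bool // ¬ ∀ j : Fin (n - 1), (j : ℕ) < r → f j = true} :=
    { toFun := fun x => ⟨fun j => x.1[j.val]'(by have := j.isLt; have := x.2.1; omega), by
        intro hall
        apply x.2.2
        rw [take_replicate_iff r x.1 (by omega)]
        intro j hj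
        have hjl : j < x.1.length := by omega
        rw [List.getElem?_eq_getElem hjl]
        exact congrArg some (hall ⟨j, by omega⟩ hj)⟩
      invFun := fun x => ⟨List.ofFn x.1, by simp, by
        intro hrep
        apply x.2
        intro j hj
        have h2 := (take_replicate_iff r _ (by simp only [List.length_ofFn]; omega)).1 hrep j hj
        have hjl : (j : ℕ) < (List.ofFn x.1).length := by
          simp only [List.length_ofFn]; exact j.isLt
        rw [List.getElem?_eq_getElem hjl, List.getElem_ofFn] at h2
        have h3 := Option.some.inj h2
        simpa using h3⟩
      left_inv := fun x => by
        apply Subtype.ext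
        apply List.ext_getElem (by simp [x.2.1])
        intro j h1 h2
        simp
      right_inv := fun x => by
        apply Subtype.ext
        funext j
        simp }
  rw [Nat.card_congr e1, Nat.card_eq_fintype_card, Fintype.card_subtype_compl]
  have e2 : {f : Fin (n - 1) → Bool // ∀ j : Fin (n - 1), (j : ℕ) < r → f j = true}
      ≃ (Fin (n - 1 - r) → Bool) :=
    { toFun := fun x k => x.1 ⟨r + k, by have := k.isLt; omega⟩
      invFun := fun g => ⟨fun j => if h : (j : ℕ) < r then true
          else g ⟨(j : ℕ) - r, by have := j.isLt; omega⟩, fun j hj => by simp [hj]⟩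
      left_inv := fun x => by
        apply Subtype.ext
        funext j
        dsimp only
        by_cases h : (j : ℕ) < r
        · rw [dif_pos h]
          exact (x.2 j h).symm
        · rw [dif_neg h]
          exact congrArg x.1 (Fin.ext (show r + ((j : ℕ) - r) = (j : ℕ) by omega))
      right_inv := fun g => by
        funext k
        dsimp only
        rw [dif_neg (by omega)]
        exact congrArg g (Fin.ext (show r + (k : ℕ) - r = (k : ℕ) by omega)) }
  rw [Fintype.card_congr e2]
  simp only [Fintype.card_fun, Fintype.card_fin, Fintype.card_bool]
  rw [show n - 1 - r = n - r - 1 from by omega]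

/-- The number of maximal NE-paths in the RevLex diagram of size `C(n,2)+r` (the staircase
on `n` columns with the boxes `(a,n)`, `a > r`, removed) is `2^(n-1) - 2^(n-r-1)`. -/
theorem stmt_1 (n r : ℕ) (hn : 1 ≤ n) (hr : 0 < r) (hrn : r < n) :
    numMaxPaths (staircase n \ {p : ℕ × ℕ | p.2 = n ∧ r < p.1}) n
      = 2 ^ (n - 1) - 2 ^ (n - r - 1) := by
  classical
  rw [numMaxPaths, ← count_words n r hn hr hrn]
  refine (Nat.card_eq_of_bijective
    (fun w : {w : List Bool // w.length = n - 1 ∧ w.take r ≠ List.replicate r true} =>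
      (⟨(revPath (1, n) w.1).reverse, forward n r hn hr hrn w.1 w.2.1 w.2.2⟩ :
        {l : List (ℕ × ℕ) // ∃ i,
          IsNEPathIn (staircase n \ {p : ℕ × ℕ | p.2 = n ∧ r < p.1}) (i, i) (1, n) l}))
    ⟨?_, ?_⟩).symm
  · intro w w' hww
    apply Subtype.ext
    have h2 : (revPath (1, n) w.1).reverse = (revPath (1, n) w'.1).reverse :=
      congrArg Subtype.val hww
    exact revPath_inj _ _ _ (List.reverse_injective h2)
  · rintro ⟨l, i, hl⟩
    obtain ⟨w, h1, h2, h3⟩ := backward n r hn hr hrn l i hl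
    exact ⟨⟨w, h1, h2⟩, Subtype.ext h3.symm⟩
end

section
/- Let k ≥ 3, s ≥ 0 be integers with (k−1)(2^k − (3/2)k) − 1 > s, and set m = C(k+1,2) + s. Then the sum over i from k to m of C(m,i) is strictly greater than 2^k times the sum over i from k−1 to m−k of C(m−k, i). -/
open Finset in
lemma keyB (a n : ℕ) (hn : a + 3 ≤ n) (hbound : n + 2 ≤ (a+2)*(2^(a+3) - (a+3))) :
    ∑ i ∈ range (a+3), (n+(a+3)).choose i < 2^(a+3) * ∑ j ∈ range (a+2), n.choose j := by
  set k := a + 3 with hkdef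
  have hvan : ∑ i ∈ range k, (n+k).choose i
      = ∑ j ∈ range k, n.choose j * ∑ t ∈ range (k - j), k.choose t := by
    have h1 : ∀ i, (n+k).choose i = ∑ j ∈ range (i+1), n.choose j * k.choose (i - j) := by
      intro i
      rw [Nat.add_choose_eq, Finset.Nat.sum_antidiagonal_eq_sum_range_succ_mk]
    calc ∑ i ∈ range k, (n+k).choose i
        = ∑ i ∈ Finset.Ico 0 k, ∑ j ∈ Finset.Ico 0 (i+1), n.choose j * k.choose (i - j) := by
          rw [← Finset.range_eq_Ico]
          exact Finset.sum_congr rfl fun i _ => by rw [h1 i, Finset.range_eq_Ico]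
      _ = ∑ j ∈ Finset.Ico 0 k, ∑ i ∈ Finset.Ico j k, n.choose j * k.choose (i - j) := by
          rw [← Finset.sum_Ico_Ico_comm 0 k (fun j i => n.choose j * k.choose (i - j))]
      _ = ∑ j ∈ range k, n.choose j * ∑ t ∈ range (k - j), k.choose t := by
          rw [← Finset.range_eq_Ico]
          refine Finset.sum_congr rfl fun j hj => ?_
          rw [Finset.sum_Ico_eq_sum_range, Finset.mul_sum]
          exact Finset.sum_congr rfl fun t _ => by rw [Nat.add_sub_cancel_left]
  rw [hvan]
  have hsplit : ∑ j ∈ range k, n.choose j * ∑ t ∈ range (k - j), k.choose t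
      = (∑ j ∈ range (a+2), n.choose j * ∑ t ∈ range (k - j), k.choose t) + n.choose (a+2) := by
    rw [Finset.sum_range_succ]
    congr 1
    rw [show k - (a+2) = 1 from by omega]
    simp
  rw [hsplit, Finset.mul_sum]
  have hS : ∀ j, j < a + 2 → (∑ t ∈ range (k - j), k.choose t) ≤ 2^k := by
    intro j _
    rw [← Nat.sum_range_choose]
    exact Finset.sum_le_sum_of_subset (Finset.range_subset_range.2 (by omega))
  have hRHS : ∑ j ∈ range (a+2), 2^k * n.choose j
      = (∑ j ∈ range (a+2), n.choose j * ∑ t ∈ range (k - j), k.choose t)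
        + ∑ j ∈ range (a+2), n.choose j * (2^k - ∑ t ∈ range (k - j), k.choose t) := by
    rw [← Finset.sum_add_distrib]
    refine Finset.sum_congr rfl fun j hj => ?_
    rw [← Nat.mul_add, Nat.add_sub_cancel' (hS j (Finset.mem_range.1 hj)), Nat.mul_comm]
  rw [hRHS]
  refine Nat.add_lt_add_left ?_ _
  have hterm : n.choose (a+1) * (2^k - ∑ t ∈ range (k - (a+1)), k.choose t)
      ≤ ∑ j ∈ range (a+2), n.choose j * (2^k - ∑ t ∈ range (k - j), k.choose t) :=
    Finset.single_le_sum (f := fun j => n.choose j * (2^k - ∑ t ∈ range (k - j), k.choose t))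
      (fun _ _ => Nat.zero_le _) (Finset.mem_range.2 (by omega))
  refine lt_of_lt_of_le ?_ hterm
  have hS2 : ∑ t ∈ range (k - (a+1)), k.choose t = a + 4 := by
    rw [show k - (a+1) = 2 from by omega, Finset.sum_range_succ, Finset.sum_range_one,
      Nat.choose_zero_right, Nat.choose_one_right]
    omega
  rw [hS2]
  have hid : n.choose (a+2) * (a+2) = n.choose (a+1) * (n - (a+1)) :=
    Nat.choose_succ_right_eq n (a+1)
  have hc1 : 1 ≤ n.choose (a+1) := Nat.choose_pos (by omega)
  have hP : 2*(a+3) ≤ 2^k := by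
    have := Nat.lt_two_pow_self (n := a+2)
    calc 2*(a+3) ≤ 2*2^(a+2) := by omega
      _ = 2^k := by rw [← pow_succ']
  obtain ⟨Q, hQ⟩ : ∃ Q, 2^k = Q + (a+4) := ⟨2^k - (a+4), by omega⟩
  obtain ⟨d, hd⟩ : ∃ d, n = d + (a+1) := ⟨n - (a+1), by omega⟩
  have hbound' : d + 1 ≤ (a+2) * Q := by
    have h2 : n + 2 ≤ (a+2) * (2^k - (a+3)) := hbound
    rw [hQ, hd, show Q + (a+4) - (a+3) = Q + 1 from by omega] at h2
    nlinarith
  have hmul : n.choose (a+2) * (a+2) < (n.choose (a+1) * Q) * (a+2) := by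
    rw [hid, show n - (a+1) = d from by omega]
    calc n.choose (a+1) * d ≤ n.choose (a+1) * ((a+2)*Q - 1) :=
          Nat.mul_le_mul_left _ (by omega)
      _ < n.choose (a+1) * ((a+2)*Q) := by
          exact Nat.mul_lt_mul_of_le_of_lt (le_refl _) (by omega) (by omega)
      _ = (n.choose (a+1) * Q) * (a+2) := by ring
  have hfin : n.choose (a+2) < n.choose (a+1) * Q :=
    Nat.lt_of_mul_lt_mul_right hmul
  rw [hQ, Nat.add_sub_cancel]
  exact hfin

open Finset in
lemma sum_range_add_sum_Icc_choose (N j : ℕ) (hj : j ≤ N + 1) :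
    (∑ i ∈ range j, N.choose i) + ∑ i ∈ Finset.Icc j N, N.choose i = 2 ^ N := by
  rw [← Finset.Ico_add_one_right_eq_Icc, Finset.range_eq_Ico,
    Finset.sum_Ico_consecutive _ (Nat.zero_le j) hj, ← Finset.range_eq_Ico,
    Nat.sum_range_choose]

/-- For `k ≥ 3`, `s ≥ 0` with `(k-1)(2^k - (3/2)k) - 1 > s` (in the factor-2-cleared form
`(k-1)(2^(k+1) - 3k) > 2s + 2`) and `m = C(k+1,2) + s`, one has
`∑_{i=k}^{m} C(m,i) > 2^k ∑_{i=k-1}^{m-k} C(m-k,i)`. -/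
theorem stmt_6 (k s m : ℕ) (hk : 3 ≤ k) (hm : m = Nat.choose (k + 1) 2 + s)
    (h : 2 * s + 2 < (k - 1) * (2 ^ (k + 1) - 3 * k)) :
    2 ^ k * ∑ i ∈ Finset.Icc (k - 1) (m - k), (m - k).choose i
      < ∑ i ∈ Finset.Icc k m, m.choose i := by
  obtain ⟨a, rfl⟩ : ∃ a, k = a + 3 := ⟨k - 3, by omega⟩
  have hch1 : (a+3+1).choose 2 = (a+4)*(a+3)/2 := Nat.choose_two_right _
  have heven : (a+4)*(a+3)/2*2 = (a+4)*(a+3) := by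
    have : 2 ∣ (a+4)*(a+3) := by
      rcases Nat.even_or_odd a with ⟨t, ht⟩ | ⟨t, ht⟩
      · exact ⟨(t+2)*(a+3), by subst ht; ring⟩
      · exact ⟨(a+4)*(t+2), by subst ht; ring⟩
    omega
  have hkm : a + 3 ≤ m := by
    rw [hm, hch1]
    have : (a+3) + (a+3) ≤ (a+4)*(a+3) := by nlinarith
    omega
  obtain ⟨n, hmn⟩ : ∃ n, m = n + (a+3) := ⟨m - (a+3), by omega⟩
  have h2n : 2*n = (a+3)*(a+2) + 2*s := by
    have : 2*m = (a+4)*(a+3) + 2*s := by rw [hm, hch1]; omega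
    nlinarith
  have hPk : 2*(a+3) ≤ 2^(a+3) := by
    have := Nat.lt_two_pow_self (n := a+2)
    calc 2*(a+3) ≤ 2*2^(a+2) := by omega
      _ = 2^(a+3) := by rw [← pow_succ']
  have hbound : n + 2 ≤ (a+2) * (2^(a+3) - (a+3)) := by
    rw [pow_succ'] at h
    have h3k : 3*(a+3) ≤ 2*2^(a+3) := by omega
    have hk1 : a+3 ≤ 2^(a+3) := by omega
    zify [h3k, show 1 ≤ a + 3 from by omega] at h
    zify [hk1]
    have h2nZ : 2*(n:ℤ) = ((a:ℤ)+3)*((a:ℤ)+2) + 2*s := by exact_mod_cast h2n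
    have hhalf : 2*((n:ℤ)+2) ≤ 2*(((a:ℤ)+2) * ((2:ℤ)^(a+3) - ((a:ℤ)+3))) + 1 := by
      push_cast at h ⊢
      nlinarith [h, h2nZ]
    have hq : ∀ q : ℤ, 2*((n:ℤ)+2) ≤ 2*q + 1 → (n:ℤ)+2 ≤ q := by intro q hq; omega
    have := hq _ hhalf
    convert this using 1 <;> push_cast <;> ring
  have hnk : a + 3 ≤ n := by
    have : 2*(a+3) ≤ (a+3)*(a+2) := by nlinarith
    omega
  have hA := sum_range_add_sum_Icc_choose n (a+2) (by omega)
  have hB := sum_range_add_sum_Icc_choose m (a+3) (by omega)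
  have hkey : ∑ i ∈ Finset.range (a+3), m.choose i
      < 2^(a+3) * ∑ j ∈ Finset.range (a+2), n.choose j := by
    rw [hmn]; exact keyB a n hnk hbound
  have hpow2 : (2:ℕ)^m = 2^(a+3) * 2^n := by rw [hmn, pow_add, Nat.mul_comm]
  have hIcc1 : Finset.Icc (a+3-1) (m - (a+3)) = Finset.Icc (a+2) n := by
    congr 1 <;> omega
  rw [hIcc1, show m - (a+3) = n from by omega]
  set A := ∑ i ∈ Finset.range (a+2), n.choose i with hAdef
  set T := ∑ i ∈ Finset.Icc (a+2) n, n.choose i with hTdef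
  set B := ∑ i ∈ Finset.range (a+3), m.choose i with hBdef
  set S := ∑ i ∈ Finset.Icc (a+3) m, m.choose i with hSdef
  have hsum : B + S = 2^(a+3) * A + 2^(a+3) * T := by
    rw [hB, ← Nat.mul_add, hA, ← hpow2]
  have h2kA : B < 2^(a+3) * A := hkey
  have h3 : 2^(a+3)*A + 2^(a+3)*T < 2^(a+3)*A + S := by
    rw [← hsum]; exact Nat.add_lt_add_right h2kA S
  exact Nat.lt_of_add_lt_add_left h3
end

section
/- For k ≥ 3, s ≥ 0, m = C(k+1,2) + s, define F(t) = 2^t · Σ_{i=k}^{m−t} C(m−t, i) + (2^t − 1)·C(m−t, k−1) + (2^t − t − 1)·C(m−t, k−2) for 0 ≤ t ≤ m−k. Then F(t) ≥ F(t+1) for all 0 ≤ t ≤ m−k−1; in particular Σ_{i=k}^m C(m,i) = F(0) ≥ F(k). -/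


lemma key_sum (j n : ℕ) (hn : j + 1 ≤ n) :
    ∑ i ∈ Finset.Icc (j+1) (n+1), (n+1).choose i
      = 2 * ∑ i ∈ Finset.Icc (j+1) n, n.choose i + n.choose j := by
  have h1 : ∑ i ∈ Finset.Icc (j+1) (n+1), (n+1).choose i
      = ∑ i ∈ Finset.Icc (j+1) (n+1), (n.choose (i-1) + n.choose i) := by
    refine Finset.sum_congr rfl fun i hi => ?_
    obtain ⟨i', rfl⟩ : ∃ i', i = i' + 1 := ⟨i-1, by have := (Finset.mem_Icc.mp hi).1; omega⟩
    simp [Nat.choose_succ_succ']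
  rw [h1, Finset.sum_add_distrib]
  have h2 : ∑ i ∈ Finset.Icc (j+1) (n+1), n.choose (i-1)
      = ∑ i ∈ Finset.Icc j n, n.choose i := by
    rw [← Finset.map_add_right_Icc j n 1, Finset.sum_map]
    simp [addRightEmbedding]
  have h3 : ∑ i ∈ Finset.Icc (j+1) (n+1), n.choose i
      = ∑ i ∈ Finset.Icc (j+1) n, n.choose i := by
    rw [Finset.sum_Icc_succ_top (by omega : j+1 ≤ n+1)]
    simp
  have h4 : ∑ i ∈ Finset.Icc j n, n.choose i
      = n.choose j + ∑ i ∈ Finset.Icc (j+1) n, n.choose i := by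
    have hins : Finset.Icc j n = insert j (Finset.Icc (j+1) n) := by
      ext x; simp [Finset.mem_Icc]; omega
    rw [hins, Finset.sum_insert (by simp [Finset.mem_Icc])]
  rw [h2, h3, h4]; ring

/-- For `k ≥ 3`, `s ≥ 0`, `m = C(k+1,2) + s` and
`F(t) = 2^t ∑_{i=k}^{m-t} C(m-t,i) + (2^t-1) C(m-t,k-1) + (2^t-t-1) C(m-t,k-2)`,
the function `F` is weakly decreasing on `0 ≤ t ≤ m-k`; in particular
`∑_{i=k}^{m} C(m,i) = F(0) ≥ F(k)`. -/
theorem stmt_7 (k s m : ℕ) (hk : 3 ≤ k) (hm : m = Nat.choose (k + 1) 2 + s)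
    (F : ℕ → ℕ)
    (hF : ∀ t, F t = 2 ^ t * ∑ i ∈ Finset.Icc k (m - t), (m - t).choose i
        + (2 ^ t - 1) * (m - t).choose (k - 1)
        + (2 ^ t - t - 1) * (m - t).choose (k - 2)) :
    (∀ t, t ≤ m - k - 1 → F (t + 1) ≤ F t) ∧
    F 0 = ∑ i ∈ Finset.Icc k m, m.choose i ∧
    F k ≤ F 0 := by
  have hck : (k+1).choose 2 = (k+1)*k/2 := by
    rw [Nat.choose_two_right]; simp
  have h4k : 4*k ≤ (k+1)*k := by nlinarith
  have hm2 : 2*k ≤ m := by omega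
  obtain ⟨j, rfl⟩ : ∃ j, k = j + 3 := ⟨k - 3, by omega⟩
  have mono : ∀ t, t ≤ m - (j+3) - 1 → F (t + 1) ≤ F t := by
    intro t ht
    have htm : t + (j+3) + 1 ≤ m := by omega
    set n := m - t - 1 with hn
    have hmt : m - t = n + 1 := by omega
    have hmt1 : m - (t+1) = n := by omega
    have hkn : (j+2) + 1 ≤ n := by omega
    rw [hF t, hF (t+1), hmt, hmt1]
    have e1 : j + 3 - 1 = (j+1) + 1 := rfl
    have e2 : j + 3 - 2 = j + 1 := rfl
    rw [e1, e2, key_sum (j+2) n hkn,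
        Nat.choose_succ_succ' n (j+1), Nat.choose_succ_succ' n j]
    set S := ∑ i ∈ Finset.Icc (j+2+1) n, n.choose i
    set c1 := n.choose (j+2)
    set c2 := n.choose (j+1)
    set c3 := n.choose j
    have hp1 : t + 1 ≤ 2 ^ t := Nat.lt_two_pow_self (n := t)
    have hpow : (2:ℕ) ^ (t+1) = 2 * 2 ^ t := by ring
    have q1 : 1 ≤ 2 ^ t := by omega
    have q2 : t ≤ 2 ^ t := by omega
    have q4 : 1 ≤ 2 ^ t - t := by omega
    have q5 : 1 ≤ 2 ^ (t+1) := by omega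
    have q6 : t + 1 ≤ 2 ^ (t+1) := by omega
    have q7 : 1 ≤ 2 ^ (t+1) - (t+1) := by omega
    zify [hp1, q1, q2, q4, q5, q6, q7]
    have hz : ((t:ℤ)+1) ≤ (2:ℤ)^t := by exact_mod_cast hp1
    nlinarith [mul_nonneg (by linarith : (0:ℤ) ≤ (2:ℤ)^t - t - 1) (by positivity : (0:ℤ) ≤ (c3:ℤ))]
  refine ⟨mono, ?_, ?_⟩
  · rw [hF 0]; simp
  · have claim : ∀ i, i ≤ m - (j+3) → F i ≤ F 0 := by
      intro i
      induction i with
      | zero => exact fun _ => le_refl _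
      | succ p ih => intro hp; exact le_trans (mono p (by omega)) (ih (by omega))
    exact claim (j+3) (by omega)
end

section
/- Let L be a shifted Ferrers diagram (strongly stable diagram) on n+1 columns whose diagram is not of the form 'all rows full down to some row' (i.e., it has more than one strongly stable generator), with total size u. Let L'' be the diagram obtained from L by first replacing the bottom row by its single diagonal box and then deleting all diagonal boxes (and shifting indices). Then e(L) ≥ 2·e(L'') and |L''| ≥ u − n. -/
lemma staircase_finite (n : ℕ) : (staircase n).Finite := by
  apply Set.Finite.subset (Set.finite_Icc (1,1) (n,n))
  rintro ⟨a,b⟩ ⟨h1,h2,h3⟩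
  simp only [Set.mem_Icc, Prod.le_def] at *
  omega

lemma finite_lists {α : Type*} {S : Set α} (hS : S.Finite) (k : ℕ) :
    {l : List α | l.length ≤ k ∧ ∀ x ∈ l, x ∈ S}.Finite := by
  haveI : Finite S := hS
  have h1 : {l : List S | l.length ≤ k}.Finite := List.finite_length_le S k
  apply (h1.image (List.map (Subtype.val))).subset
  rintro l ⟨hlen, hmem⟩
  refine ⟨l.attach.map (fun x => ⟨x.1, hmem _ x.2⟩), by simpa using hlen, ?_⟩
  simp [List.map_map]

lemma length_le_of_path {N : ℕ} (l : List (ℕ × ℕ)) (hc : l.Chain' NEStep)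
    (hmem : ∀ x ∈ l, x ∈ staircase N) : l.length ≤ N + 1 := by
  set f : ℕ × ℕ → ℤ := fun p => (p.2 : ℤ) - p.1 with hf
  haveI : IsTrans (ℕ × ℕ) (fun p q => f p < f q) := ⟨fun _ _ _ h1 h2 => h1.trans h2⟩
  have hpw : l.Pairwise (fun p q => f p < f q) := by
    rw [← List.isChain_iff_pairwise]
    refine hc.imp ?_
    rintro a b (⟨h1, h2⟩ | ⟨h1, h2⟩) <;> simp [hf, ← h1, h2]
  have hpw2 : (l.map f).Pairwise (· < ·) := List.pairwise_map.mpr hpw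
  have hnd : (l.map f).Nodup := hpw2.imp ne_of_lt
  have hsub : (l.map f).toFinset ⊆ Finset.Icc (0:ℤ) N := by
    intro x hx
    simp only [List.mem_toFinset, List.mem_map] at hx
    obtain ⟨p, hp, rfl⟩ := hx
    obtain ⟨h1, h2, h3⟩ := hmem p hp
    simp only [Finset.mem_Icc, hf]
    omega
  have := Finset.card_le_card hsub
  rw [List.toFinset_card_of_nodup hnd, List.length_map] at this
  rw [Int.card_Icc] at this
  omega

lemma paths_finite (D : Set (ℕ × ℕ)) (N : ℕ) (hD : D ⊆ staircase N) (t : ℕ × ℕ) :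
    Finite {l : List (ℕ × ℕ) // ∃ i, IsNEPathIn D (i, i) t l} := by
  have : {l : List (ℕ × ℕ) | ∃ i, IsNEPathIn D (i, i) t l} ⊆
      {l : List (ℕ × ℕ) | l.length ≤ N + 1 ∧ ∀ x ∈ l, x ∈ staircase N} := by
    rintro l ⟨i, hc, _, _, hm⟩
    exact ⟨length_le_of_path l hc (fun x hx => hD (hm x hx)), fun x hx => hD (hm x hx)⟩
  exact ((finite_lists (staircase_finite N) (N+1)).subset this).to_subtype

/-- prepend a north or east step to the column-shifted list -/
def pmapAux (b : Bool) (l : List (ℕ × ℕ)) : List (ℕ × ℕ) :=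
  match l with
  | [] => []
  | x :: t => (if b then x else (x.1 + 1, x.2 + 1)) :: (x :: t).map (fun p => (p.1, p.2 + 1))

lemma pmapAux_inj {l l' : List (ℕ × ℕ)} {b b' : Bool} {i i' : ℕ}
    (hl : l.head? = some (i, i)) (hl' : l'.head? = some (i', i'))
    (h : pmapAux b l = pmapAux b' l') : l = l' ∧ b = b' := by
  cases l with
  | nil => simp at hl
  | cons x t =>
    cases l' with
    | nil => simp at hl'
    | cons x' t' =>
      simp only [List.head?_cons, Option.some.injEq] at hl hl'
      subst hl hl'
      simp only [pmapAux, List.cons.injEq, List.map_cons] at h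
      obtain ⟨hhead, hx, htail⟩ := h
      have hii : i = i' := by simpa [Prod.ext_iff] using hx
      subst hii
      have htt : t = t' := by
        have : Function.Injective (fun p : ℕ × ℕ => (p.1, p.2 + 1)) := by
          intro p q hpq
          simp only [Prod.ext_iff] at hpq ⊢
          omega
        exact List.map_injective_iff.mpr this htail
      subst htt
      refine ⟨rfl, ?_⟩
      cases b <;> cases b' <;> simp_all

/-- Let `D` be a strongly stable diagram on `n+1` columns with full first row, bottom row
index `M`, and more than one strongly stable generator (i.e. `D` is not of the form
"all rows `1,…,t` full"). Let `D''` be obtained from `D` by replacing the bottom row by its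
diagonal box and then deleting all diagonal boxes (shifting column indices down by one), so
`D'' = {(a,b) | (a,b+1) ∈ D, a ≤ b, a < M}`. Then `e(D) ≥ 2·e(D'')` and `|D''| ≥ |D| - n`. -/
theorem stmt_11 (n : ℕ) (hn : 1 ≤ n) (D : Set (ℕ × ℕ)) (M : ℕ)
    (hss : StronglyStableIn (n + 1) D)
    (hfull : (1, n + 1) ∈ D)
    (hM : IsGreatest {a | ∃ b, (a, b) ∈ D} M)
    (hgen : ¬ ∃ t, D = {p : ℕ × ℕ | 1 ≤ p.1 ∧ p.1 ≤ t ∧ p.1 ≤ p.2 ∧ p.2 ≤ n + 1}) :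
    2 * numMaxPaths {p : ℕ × ℕ | (p.1, p.2 + 1) ∈ D ∧ p.1 ≤ p.2 ∧ p.1 < M} n
        ≤ numMaxPaths D (n + 1) ∧
    D.ncard - n ≤ ({p : ℕ × ℕ | (p.1, p.2 + 1) ∈ D ∧ p.1 ≤ p.2 ∧ p.1 < M} : Set (ℕ × ℕ)).ncard := by
  obtain ⟨hsub, hup⟩ := hss
  set D'' : Set (ℕ × ℕ) := {p : ℕ × ℕ | (p.1, p.2 + 1) ∈ D ∧ p.1 ≤ p.2 ∧ p.1 < M} with hD''def
  obtain ⟨hMmem, hMub⟩ := hM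
  obtain ⟨bM, hbM⟩ := hMmem
  have hM1 : 1 ≤ M := (hsub hbM).1
  have hMbM : M ≤ bM := (hsub hbM).2.1
  have hbMn : bM ≤ n + 1 := (hsub hbM).2.2
  have hMn1 : (M, n + 1) ∉ D := by
    intro h
    apply hgen
    refine ⟨M, Set.ext fun p => ⟨fun hp => ⟨(hsub hp).1, ?_, (hsub hp).2⟩, ?_⟩⟩
    · exact hMub ⟨p.2, by simpa using hp⟩
    · rintro ⟨h1, h2, h3, h4⟩
      have := hup M (n+1) p.1 p.2 h h1 h2 h3 h4
      simpa using this
  have hMn : M ≤ n := by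
    rcases Nat.lt_or_ge M (n+1) with h | h
    · omega
    · exfalso
      have hMeq : M = n + 1 := by omega
      have hb : bM = n + 1 := by omega
      rw [hb] at hbM
      exact hMn1 hbM
  -- shift map
  set sh : ℕ × ℕ → ℕ × ℕ := fun p => (p.1, p.2 + 1) with hsh
  have hsh_inj : Function.Injective sh := by
    intro p q hpq
    simp only [hsh, Prod.ext_iff] at hpq ⊢
    omega
  have hDfin : D.Finite := (staircase_finite (n+1)).subset hsub
  have hD''fin : D''.Finite := by
    apply (hDfin.preimage hsh_inj.injOn).subset
    intro p hp
    exact hp.1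
  -- Part 2
  set T : Set (ℕ × ℕ) := (fun a => (a,a)) '' Set.Icc 1 M ∪ (fun c => (M,c)) '' Set.Icc (M+1) n
    with hT
  have hTfin : T.Finite := ((Set.finite_Icc _ _).image _).union ((Set.finite_Icc _ _).image _)
  have hcover : D ⊆ sh '' D'' ∪ T := by
    rintro ⟨a, c⟩ hac
    have hst := hsub hac
    have haM : a ≤ M := hMub ⟨c, hac⟩
    obtain ⟨h1, h2, h3⟩ := hst
    rcases eq_or_lt_of_le h2 with heq | hlt
    · right; left
      exact ⟨a, Set.mem_Icc.mpr ⟨h1, haM⟩, by simpa using heq⟩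
    · rcases lt_or_eq_of_le haM with hlt2 | heq2
      · left
        refine ⟨(a, c - 1), ⟨?_, by omega, hlt2⟩, ?_⟩
        · show (a, c - 1 + 1) ∈ D
          rwa [Nat.sub_add_cancel (by omega)]
        · simp only [hsh]
          rw [Nat.sub_add_cancel (by omega)]
      · right; right
        have hcn : c ≤ n := by
          rcases Nat.lt_or_ge c (n+1) with h | h
          · omega
          · exfalso
            have : c = n + 1 := by omega
            rw [heq2, this] at hac
            exact hMn1 hac
        exact ⟨c, Set.mem_Icc.mpr ⟨by omega, hcn⟩, by rw [heq2]⟩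
  have hTcard : T.ncard ≤ n := by
    have h1 : ((fun a => ((a:ℕ),a)) '' Set.Icc 1 M).ncard ≤ (Set.Icc 1 M).ncard :=
      Set.ncard_image_le (Set.finite_Icc _ _)
    have h2 : ((fun c => (M,(c:ℕ))) '' Set.Icc (M+1) n).ncard ≤ (Set.Icc (M+1) n).ncard :=
      Set.ncard_image_le (Set.finite_Icc _ _)
    have e1 : (Set.Icc (1:ℕ) M).ncard = M := by
      rw [← Finset.coe_Icc, Set.ncard_coe_finset, Nat.card_Icc]
      omega
    have e2 : (Set.Icc (M+1) n).ncard = n - M := by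
      rw [← Finset.coe_Icc, Set.ncard_coe_finset, Nat.card_Icc]
      omega
    have := Set.ncard_union_le ((fun a => ((a:ℕ),a)) '' Set.Icc 1 M)
      ((fun c => (M,(c:ℕ))) '' Set.Icc (M+1) n)
    rw [hT]
    omega
  have hpart2 : D.ncard ≤ D''.ncard + n := by
    calc D.ncard ≤ (sh '' D'' ∪ T).ncard :=
          Set.ncard_le_ncard hcover ((hD''fin.image _).union hTfin)
      _ ≤ (sh '' D'').ncard + T.ncard := Set.ncard_union_le _ _
      _ ≤ D''.ncard + n := by
          rw [Set.ncard_image_of_injective _ hsh_inj]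
          omega
  refine ⟨?_, by omega⟩
  -- Part 1
  have key : ∀ (b : Bool) (l : List (ℕ × ℕ)) (i : ℕ), IsNEPathIn D'' (i,i) (1,n) l →
      ∃ j, IsNEPathIn D (j, j) (1, n+1) (pmapAux b l) := by
    rintro b l i ⟨hc, hhead, hlast, hmem⟩
    cases l with
    | nil => simp at hhead
    | cons x t =>
      simp only [List.head?_cons, Option.some.injEq] at hhead
      subst hhead
      have hxD'' : ((i:ℕ), (i:ℕ)) ∈ D'' := hmem _ List.mem_cons_self
      obtain ⟨hxD, -, hxM⟩ := hxD''
      have hi1 : 1 ≤ i := (hsub hxD).1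
      refine ⟨if b then i else i + 1, ?_, ?_, ?_, ?_⟩
      · -- chain
        show List.Chain' NEStep (_ :: ((i,i) :: t).map sh)
        rw [List.Chain', List.isChain_cons]
        constructor
        · intro h hh
          rw [List.map_cons, List.head?_cons, Option.mem_def, Option.some.injEq] at hh
          subst hh
          cases b
          · simp only [if_neg Bool.false_ne_true]
            left
            exact ⟨rfl, rfl⟩
          · simp only [if_pos rfl]
            right
            exact ⟨rfl, rfl⟩
        · rw [List.isChain_map]
          refine hc.imp ?_
          rintro a c (⟨h1, h2⟩ | ⟨h1, h2⟩)
          · left; simp only [hsh]; omega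
          · right; simp only [hsh]; omega
      · -- head
        cases b <;> simp [pmapAux]
      · -- last
        show (((if b then ((i:ℕ),(i:ℕ)) else (i+1, i+1))) :: ((i,i) :: t).map sh).getLast?
            = some (1, n+1)
        rw [List.map_cons, List.getLast?_cons_cons, ← List.map_cons, List.getLast?_map, hlast]
        rfl
      · -- membership
        intro p hp
        simp only [pmapAux, List.mem_cons] at hp
        rcases hp with rfl | hp
        · cases b
          · simp only [if_neg Bool.false_ne_true]
            exact hup M bM (i+1) (i+1) hbM (by omega) (by omega) le_rfl (by omega)
          · simp only [if_pos rfl]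
            exact hup i (i+1) i i hxD hi1 le_rfl le_rfl (by omega)
        · rw [List.mem_map] at hp
          obtain ⟨q, hq, rfl⟩ := hp
          exact (hmem q hq).1
  haveI hBfin : Finite {l : List (ℕ × ℕ) // ∃ i, IsNEPathIn D (i, i) (1, n+1) l} :=
    paths_finite D (n+1) hsub (1, n+1)
  set F : {l : List (ℕ × ℕ) // ∃ i, IsNEPathIn D'' (i, i) (1, n) l} × Bool →
      {l : List (ℕ × ℕ) // ∃ i, IsNEPathIn D (i, i) (1, n+1) l} :=
    fun x => ⟨pmapAux x.2 x.1.1, by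
      obtain ⟨i, hi⟩ := x.1.2
      exact key x.2 x.1.1 i hi⟩ with hF
  have hFinj : Function.Injective F := by
    rintro ⟨⟨l, hl⟩, b⟩ ⟨⟨l', hl'⟩, b'⟩ h
    have heq : pmapAux b l = pmapAux b' l' := congrArg Subtype.val h
    obtain ⟨i, _, hh, -, -⟩ := hl
    obtain ⟨i', _, hh', -, -⟩ := hl'
    obtain ⟨rfl, rfl⟩ := pmapAux_inj hh hh' heq
    rfl
  have hcard := Nat.card_le_card_of_injective F hFinj
  rw [Nat.card_prod] at hcard
  unfold numMaxPaths
  simpa [mul_comm] using hcard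
end

section
/- Fix r ≥ 1. If for n = C(k,2) + r (some k ≥ 3) one has 2^(n−k−1) − 2^(n−k−r−1) < Σ_{i=k−1}^{n−k−1} C(n−k−1, i), and if (k−1)(2^k − (3/2)k) > r, then for n' = C(k+1,2) + r one has 2^(n'−1) − 2^(n'−r−1) < Σ_{i=k}^{n'−1} C(n'−1, i). -/
open Finset

/-- Shifting a sum over an interval. -/
lemma aux_sum_shift (b m : ℕ) (f : ℕ → ℕ) :
    ∑ i ∈ Icc (b+1) (m+1), f i = ∑ i ∈ Icc b m, f (i+1) := by
  rw [← Finset.map_add_right_Icc b m 1, Finset.sum_map]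
  rfl

/-- Splitting off the bottom term of a sum over an interval. -/
lemma aux_split_low (b m : ℕ) (f : ℕ → ℕ) (h : b ≤ m) :
    ∑ i ∈ Icc b m, f i = f b + ∑ i ∈ Icc (b+1) m, f i := by
  rw [Finset.Icc_add_one_left_eq_Ioc, ← Finset.Ioc_insert_left h,
    Finset.sum_insert (by simp)]

/-- Pascal recursion for partial sums of binomial coefficients. -/
lemma aux_sum_pascal (b m : ℕ) :
    ∑ i ∈ Icc (b+1) (m+1), (m+1).choose i
      = 2 * ∑ i ∈ Icc (b+1) m, m.choose i + m.choose b := by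
  rcases le_or_gt b m with h | h
  · rw [aux_sum_shift]
    simp only [Nat.choose_succ_succ']
    rw [Finset.sum_add_distrib]
    have h2 : ∑ i ∈ Icc b m, m.choose (i+1) = ∑ i ∈ Icc (b+1) m, m.choose i := by
      rw [← aux_sum_shift b m (fun i => m.choose i), Finset.sum_Icc_succ_top (by omega)]
      simp
    rw [h2, aux_split_low b m _ h]
    ring
  · rw [Finset.Icc_eq_empty (by omega), Finset.Icc_eq_empty (by omega),
      Nat.choose_eq_zero_of_lt (by omega)]
    simp

/-- Growth of binomial coefficients along the first argument. -/
lemma aux_choose_grow (k m : ℕ) (hk : 2 ≤ k) (t : ℕ) :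
    m.choose (k-1) + (t+1) * m.choose (k-2) ≤ (m+1+t).choose (k-1) := by
  induction t with
  | zero =>
    have hp : (m+1).choose (k-1) = m.choose (k-2) + m.choose (k-1) := by
      have := Nat.choose_succ_succ' m (k-2)
      rwa [show k-2+1 = k-1 by omega] at this
    simp only [Nat.add_zero]
    omega
  | succ t ih =>
    have hp : (m+1+(t+1)).choose (k-1)
        = (m+1+t).choose (k-2) + (m+1+t).choose (k-1) := by
      have := Nat.choose_succ_succ' (m+1+t) (k-2)
      rwa [show k-2+1 = k-1 by omega, show m+1+t+1 = m+1+(t+1) by ring] at this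
    have hmono : m.choose (k-2) ≤ (m+1+t).choose (k-2) :=
      Nat.choose_le_choose _ (by omega)
    rw [hp, show (t+1+1) * m.choose (k-2)
        = m.choose (k-2) + (t+1) * m.choose (k-2) from by ring]
    calc m.choose (k-1) + (m.choose (k-2) + (t+1) * m.choose (k-2))
        = m.choose (k-2) + (m.choose (k-1) + (t+1) * m.choose (k-2)) := by ring
      _ ≤ (m+1+t).choose (k-2) + (m+1+t).choose (k-1) := add_le_add hmono ih

/-- Main induction: repeatedly doubling the tail sum. -/
lemma aux_main_ind (k m : ℕ) (hk : 2 ≤ k) (hkm : k - 1 ≤ m) (t : ℕ) :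
    2^(t+1) * (∑ i ∈ Icc (k-1) m, m.choose i) + 2^(t+1) * m.choose (k-2)
      ≤ ∑ i ∈ Icc k (m+1+t), (m+1+t).choose i + (t+2) * m.choose (k-2)
        + m.choose (k-1) := by
  induction t with
  | zero =>
    have h0 : ∑ i ∈ Icc k (m+1), (m+1).choose i
        = 2 * ∑ i ∈ Icc k m, m.choose i + m.choose (k-1) := by
      have := aux_sum_pascal (k-1) m
      rwa [show k-1+1 = k by omega] at this
    have hS : ∑ i ∈ Icc (k-1) m, m.choose i
        = m.choose (k-1) + ∑ i ∈ Icc k m, m.choose i := by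
      have := aux_split_low (k-1) m (m.choose) hkm
      rwa [show k-1+1 = k by omega] at this
    rw [show m+1+0 = m+1 from rfl, h0, hS]
    ring_nf
    omega
  | succ t ih =>
    have hp : ∑ i ∈ Icc k (m+1+(t+1)), (m+1+(t+1)).choose i
        = 2 * ∑ i ∈ Icc k (m+1+t), (m+1+t).choose i + (m+1+t).choose (k-1) := by
      have := aux_sum_pascal (k-1) (m+1+t)
      rwa [show k-1+1 = k by omega, show m+1+t+1 = m+1+(t+1) by ring] at this
    have hg := aux_choose_grow k m hk t
    rw [hp]
    calc 2^(t+1+1) * (∑ i ∈ Icc (k-1) m, m.choose i) + 2^(t+1+1) * m.choose (k-2)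
        = 2 * (2^(t+1) * (∑ i ∈ Icc (k-1) m, m.choose i)
            + 2^(t+1) * m.choose (k-2)) := by ring
      _ ≤ 2 * (∑ i ∈ Icc k (m+1+t), (m+1+t).choose i + (t+2) * m.choose (k-2)
            + m.choose (k-1)) := Nat.mul_le_mul_left 2 ih
      _ = 2 * ∑ i ∈ Icc k (m+1+t), (m+1+t).choose i
            + (m.choose (k-1) + (t+1) * m.choose (k-2))
            + (t+1+2) * m.choose (k-2) + m.choose (k-1) := by ring
      _ ≤ 2 * ∑ i ∈ Icc k (m+1+t), (m+1+t).choose i + (m+1+t).choose (k-1)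
            + (t+1+2) * m.choose (k-2) + m.choose (k-1) :=
          Nat.add_le_add_right (Nat.add_le_add_right (Nat.add_le_add_left hg _) _) _

lemma aux_two_mul_choose_two : ∀ k : ℕ, 2 * k.choose 2 = k * (k-1)
  | 0 => rfl
  | (j+1) => by
    have hp : (j+1).choose 2 = j.choose 1 + j.choose 2 := Nat.choose_succ_succ' j 1
    have ih := aux_two_mul_choose_two j
    rw [hp, Nat.choose_one_right, Nat.mul_add, ih]
    cases j with
    | zero => rfl
    | succ i => simp only [Nat.add_sub_cancel]; ring

/-- The key numeric inequality `C(m,k-1) + (k+1)·C(m,k-2) ≤ 2^k·C(m,k-2)`. -/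
lemma aux_key (k m r : ℕ) (hk : 3 ≤ k) (hm : m + 1 = Nat.choose k 2 + r)
    (hkr : 3 * k * (k - 1) + 2 * r < (k - 1) * 2 ^ (k + 1)) :
    m.choose (k-1) + (k+1) * m.choose (k-2) ≤ 2^k * m.choose (k-2) := by
  have htwo := aux_two_mul_choose_two k
  have h2m : 2*(m+1) = k*(k-1) + 2*r := by rw [hm, Nat.mul_add, htwo]
  rw [show (k-1) * 2^(k+1) = 2*(2^k*(k-1)) from by rw [pow_succ]; ring,
      show 3*k*(k-1) = 3*(k*(k-1)) from by ring] at hkr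
  have e2 : (k+1)*(k-1) + 1 = k*(k-1) + k := by
    obtain ⟨j, rfl⟩ : ∃ j, k = j+1 := ⟨k-1, by omega⟩
    simp only [Nat.add_sub_cancel]
    ring
  have hsub : m - (k-2) ≤ (2^k - (k+1)) * (k-1) := by
    rw [Nat.sub_mul]
    generalize 2^k*(k-1) = A at hkr ⊢
    generalize (k+1)*(k-1) = B at e2 ⊢
    generalize k*(k-1) = a at e2 hkr h2m
    omega
  have hprod : m.choose (k-1) * (k-1) = m.choose (k-2) * (m - (k-2)) := by
    have := Nat.choose_succ_right_eq m (k-2)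
    rwa [show k-2+1 = k-1 by omega] at this
  have hle : m.choose (k-1) * (k-1) ≤ ((2^k - (k+1)) * m.choose (k-2)) * (k-1) := by
    calc m.choose (k-1) * (k-1) = m.choose (k-2) * (m - (k-2)) := hprod
      _ ≤ m.choose (k-2) * ((2^k - (k+1)) * (k-1)) := Nat.mul_le_mul_left _ hsub
      _ = ((2^k - (k+1)) * m.choose (k-2)) * (k-1) := by ring
  have hC : m.choose (k-1) ≤ (2^k - (k+1)) * m.choose (k-2) :=
    Nat.le_of_mul_le_mul_right hle (by omega)
  have hpow : k + 1 ≤ 2^k := Nat.lt_two_pow_self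
  calc m.choose (k-1) + (k+1) * m.choose (k-2)
      ≤ (2^k - (k+1)) * m.choose (k-2) + (k+1) * m.choose (k-2) :=
        Nat.add_le_add_right hC _
    _ = ((2^k - (k+1)) + (k+1)) * m.choose (k-2) := (add_mul _ _ _).symm
    _ = 2^k * m.choose (k-2) := by rw [Nat.sub_add_cancel hpow]

/-- Induction step for RevLex minimality: fix `r ≥ 1` and `k ≥ 3` with
`(k-1)(2^k - (3/2)k) > r` (cleared: `(k-1)2^(k+1) > 3k(k-1) + 2r`). If for `n = C(k,2)+r`
one has `2^(n-1) - 2^(n-r-1) < ∑_{i=k-1}^{n-1} C(n-1,i)` (RevLex multiplicity below Lex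
multiplicity), then for `n' = C(k+1,2)+r` (so `n' - k = n`) one has
`2^(n'-1) - 2^(n'-r-1) < ∑_{i=k}^{n'-1} C(n'-1,i)`. -/
theorem stmt_12 (k r n n' : ℕ) (hk : 3 ≤ k) (hr : 1 ≤ r)
    (hn : n = Nat.choose k 2 + r) (hn' : n' = Nat.choose (k + 1) 2 + r)
    (hkr : 3 * k * (k - 1) + 2 * r < (k - 1) * 2 ^ (k + 1))
    (hbase : 2 ^ (n - 1) - 2 ^ (n - r - 1)
        < ∑ i ∈ Finset.Icc (k - 1) (n - 1), (n - 1).choose i) :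
    2 ^ (n' - 1) - 2 ^ (n' - r - 1)
      < ∑ i ∈ Finset.Icc k (n' - 1), (n' - 1).choose i := by
  have hpas : (k+1).choose 2 = k + k.choose 2 := by
    have := Nat.choose_succ_succ' k 1
    rwa [Nat.choose_one_right] at this
  have htwo := aux_two_mul_choose_two k
  have h2k : 2*k ≤ 2 * k.choose 2 := by
    rw [htwo]
    calc 2*k = k*2 := by ring
      _ ≤ k*(k-1) := Nat.mul_le_mul_left k (by omega)
  have hck : k ≤ k.choose 2 := by omega
  obtain ⟨m, rfl⟩ : ∃ m, n = m+1 := ⟨n-1, by omega⟩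
  have hn'' : n' = m + 1 + k := by rw [hn', hpas]; omega
  subst hn''
  have hm1 : m + 1 = k.choose 2 + r := hn
  rw [show m+1+k-1 = m+k by omega, show m+1+k-r-1 = (m-r)+k by omega]
  rw [show m+1-1 = m from by omega, show m+1-r-1 = m-r from by omega] at hbase
  have hk2 : 2 ≤ k := by omega
  have hkm : k - 1 ≤ m := by omega
  have hmain := aux_main_ind k m hk2 hkm (k-1)
  rw [show k-1+1 = k by omega, show m+1+(k-1) = m+k by omega,
    show k-1+2 = k+1 by omega] at hmain
  have hkey := aux_key k m r hk hm1 hkr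
  have hS : 2^k * (∑ i ∈ Finset.Icc (k-1) m, m.choose i)
      ≤ ∑ i ∈ Finset.Icc k (m+k), (m+k).choose i := by
    have h1 : 2^k * (∑ i ∈ Finset.Icc (k-1) m, m.choose i) + 2^k * m.choose (k-2)
        ≤ (∑ i ∈ Finset.Icc k (m+k), (m+k).choose i) + 2^k * m.choose (k-2) := by
      calc 2^k * (∑ i ∈ Finset.Icc (k-1) m, m.choose i) + 2^k * m.choose (k-2)
          ≤ ∑ i ∈ Finset.Icc k (m+k), (m+k).choose i + (k+1) * m.choose (k-2)
            + m.choose (k-1) := hmain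
        _ = (∑ i ∈ Finset.Icc k (m+k), (m+k).choose i)
            + (m.choose (k-1) + (k+1) * m.choose (k-2)) := by ring
        _ ≤ (∑ i ∈ Finset.Icc k (m+k), (m+k).choose i)
            + 2^k * m.choose (k-2) := Nat.add_le_add_left hkey _
    exact le_of_add_le_add_right h1
  calc 2^(m+k) - 2^((m-r)+k)
      = (2^m - 2^(m-r)) * 2^k := by rw [pow_add, pow_add, Nat.sub_mul]
    _ < (∑ i ∈ Finset.Icc (k-1) m, m.choose i) * 2^k :=
        mul_lt_mul_of_pos_right hbase (by positivity)
    _ = 2^k * (∑ i ∈ Finset.Icc (k-1) m, m.choose i) := by ring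
    _ ≤ _ := hS
end

section
/- The number of subpartitions with distinct parts of the staircase partition (n−1, n−2, …, 2, 1) equals 2^(n−1). -/
instance : IsAntisymm ℕ (· > ·) := ⟨fun a b h h' => absurd h' (lt_asymm h)⟩

lemma aux_get_add (l : List ℕ) (hl : l.Chain' (· > ·)) :
    ∀ j (h : j < l.length), l.get ⟨j, h⟩ + j ≤ l.get ⟨0, Nat.lt_of_le_of_lt (Nat.zero_le j) h⟩ := by
  have hp := List.isChain_iff_pairwise.mp hl
  rw [List.pairwise_iff_get] at hp
  intro j
  induction j with
  | zero => intro h; simp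
  | succ j ih =>
    intro h
    have hj : j < l.length := Nat.lt_of_succ_lt h
    have h1 : l.get ⟨j, hj⟩ > l.get ⟨j+1, h⟩ := hp ⟨j, hj⟩ ⟨j+1, h⟩ (by simp)
    have := ih hj
    omega

/-- The condition in the theorem is equivalent to: strictly decreasing with entries in [1, n-1]. -/
lemma aux_iff (n : ℕ) (hn : 1 ≤ n) (l : List ℕ) :
    (l.Chain' (· > ·) ∧ (∀ x ∈ l, 0 < x) ∧
      ∀ j, j < l.length → l.getD j 0 ≤ n - (j + 1)) ↔
    (l.Chain' (· > ·) ∧ ∀ x ∈ l, x ∈ Finset.Icc 1 (n - 1)) := by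
  constructor
  · rintro ⟨hc, hpos, hb⟩
    refine ⟨hc, fun x hx => ?_⟩
    obtain ⟨j, hj, rfl⟩ := List.mem_iff_get.mp hx
    have := hb j j.isLt
    simp only [List.getD_eq_getElem _ _ j.isLt] at this
    simp only [List.get_eq_getElem] at this ⊢
    simp only [Finset.mem_Icc]
    exact ⟨hpos _ hx, by omega⟩
  · rintro ⟨hc, hmem⟩
    refine ⟨hc, fun x hx => by have := (Finset.mem_Icc.mp (hmem x hx)).1; omega, fun j hj => ?_⟩
    simp only [List.getD_eq_getElem _ _ hj]
    have h0 : 0 < l.length := Nat.lt_of_le_of_lt (Nat.zero_le j) hj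
    have h1 := aux_get_add l hc j hj
    have h2 : l.get ⟨0, h0⟩ ∈ Finset.Icc 1 (n-1) := hmem _ (l.get_mem _)
    rw [Finset.mem_Icc] at h2
    simp only [List.get_eq_getElem] at h1 h2
    omega



/-- The number of subpartitions with distinct parts of the staircase partition
`(n-1, n-2, …, 2, 1)` — i.e. strictly decreasing lists of positive integers whose `j`-th
part (1-indexed) is at most `n - j`, including the empty partition — equals `2^(n-1)`. -/
theorem stmt_18 (n : ℕ) (hn : 1 ≤ n) :
    Nat.card {l : List ℕ // l.Chain' (· > ·) ∧ (∀ x ∈ l, 0 < x) ∧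
      ∀ j, j < l.length → l.getD j 0 ≤ n - (j + 1)} = 2 ^ (n - 1) := by
  have e1 : {l : List ℕ // l.Chain' (· > ·) ∧ (∀ x ∈ l, 0 < x) ∧
      ∀ j, j < l.length → l.getD j 0 ≤ n - (j + 1)} ≃
      {l : List ℕ // l.Chain' (· > ·) ∧ ∀ x ∈ l, x ∈ Finset.Icc 1 (n - 1)} :=
    Equiv.subtypeEquivRight (fun l => aux_iff n hn l)
  have e2 : {l : List ℕ // l.Chain' (· > ·) ∧ ∀ x ∈ l, x ∈ Finset.Icc 1 (n - 1)} ≃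
      {s : Finset ℕ // s ⊆ Finset.Icc 1 (n - 1)} := by
    refine Equiv.ofBijective (fun l => ⟨l.1.toFinset, fun x hx => l.2.2 x (List.mem_toFinset.mp hx)⟩) ⟨?_, ?_⟩
    · rintro ⟨l₁, hc₁, _⟩ ⟨l₂, hc₂, _⟩ h
      simp only [Subtype.mk.injEq] at h ⊢
      have hs₁ : l₁.Pairwise (· > ·) := List.isChain_iff_pairwise.mp hc₁
      have hs₂ : l₂.Pairwise (· > ·) := List.isChain_iff_pairwise.mp hc₂
      have hn₁ : l₁.Nodup := hs₁.imp (fun h => ne_of_gt h)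
      have hn₂ : l₂.Nodup := hs₂.imp (fun h => ne_of_gt h)
      exact List.Perm.eq_of_pairwise (fun a b _ _ h1 h2 => absurd h2 (lt_asymm h1))
        hs₁ hs₂ (List.perm_of_nodup_nodup_toFinset_eq hn₁ hn₂ h)
    · rintro ⟨s, hs⟩
      refine ⟨⟨s.sort (· ≥ ·), List.isChain_iff_pairwise.mpr (s.sortedGT_sort).pairwise,
        fun x hx => hs ((Finset.mem_sort _).mp hx)⟩, ?_⟩
      simp [Finset.sort_toFinset]
  have e3 : {s : Finset ℕ // s ⊆ Finset.Icc 1 (n - 1)} ≃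
      {s : Finset ℕ // s ∈ (Finset.Icc 1 (n - 1)).powerset} :=
    Equiv.subtypeEquivRight (fun s => (Finset.mem_powerset).symm)
  rw [Nat.card_congr ((e1.trans e2).trans e3), Nat.card_eq_fintype_card,
    Fintype.card_coe, Finset.card_powerset, Nat.card_Icc]
  congr 1
end

section
/- Let λ = (λ_1 > λ_2 > … > λ_m > 0) be a partition with distinct parts and λ_1 = n, and let L be its shifted Ferrers diagram, with row a occupying boxes (a,b) for a ≤ b ≤ a + λ_a − 1. Then the maximal NE-paths of L are in bijection with the distinct-part subpartitions of (λ_2, …, λ_m) contained in it (i.e., distinct-part partitions μ with μ_j ≤ λ_{j+1} for all j). -/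
/-- Row of the `t`-th box of the canonical path of `mu`. -/
def rowFn (mu : List ℕ) (t : ℕ) : ℕ := mu.countP (fun x => decide (t < x)) + 1

/-- The `t`-th box of the canonical path of `mu`. -/
def posFn (mu : List ℕ) (t : ℕ) : ℕ × ℕ := (rowFn mu t, rowFn mu t + t)

/-- The canonical path of `mu`. -/
def pathOf (n : ℕ) (mu : List ℕ) : List (ℕ × ℕ) := (List.range n).map (posFn mu)

/-- Recover `mu` from a path. -/
def extract (l : List (ℕ × ℕ)) : List ℕ :=
  (List.range ((l.headD (1,1)).1 - 1)).map (fun j => l.countP (fun p => decide (j + 2 ≤ p.1)))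

lemma countP_range_lt (v n : ℕ) :
    (List.range n).countP (fun t => decide (t < v)) = min v n := by
  induction n with
  | zero => simp
  | succ n ih =>
    rw [List.range_succ, List.countP_append, ih]
    simp only [List.countP_singleton]
    by_cases h : n < v
    · simp [h]; omega
    · simp [h]; omega

lemma countP_succ_le (t : ℕ) (l : List ℕ) (h : l.Nodup) :
    l.countP (fun x => decide (t < x)) ≤ l.countP (fun x => decide (t+1 < x)) + 1 := by
  induction l with
  | nil => simp
  | cons a tl ih =>
    rcases List.nodup_cons.mp h with ⟨ha, htl⟩
    rw [List.countP_cons, List.countP_cons]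
    by_cases hat : a = t + 1
    · subst hat
      have hmono : tl.countP (fun x => decide (t < x)) ≤ tl.countP (fun x => decide (t+1 < x)) := by
        apply List.countP_mono_left
        intro x hx
        simp only [decide_eq_true_eq]
        intro h'
        have : x ≠ t + 1 := fun e => ha (e ▸ hx)
        omega
      simp only [decide_eq_true_eq]
      split <;> split <;> omega
    · have he : (decide (t < a)) = (decide (t+1 < a)) := by
        simp only [decide_eq_decide]; omega
      rw [he]
      have := ih htl
      split <;> omega

lemma countP_lt_iff (mu : List ℕ) (h : mu.Pairwise (· > ·)) (j t : ℕ) (hj : j < mu.length) :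
    j + 1 ≤ mu.countP (fun x => decide (t < x)) ↔ t < mu[j] := by
  induction mu generalizing j with
  | nil => simp at hj
  | cons a tl ih =>
    rcases List.pairwise_cons.mp h with ⟨ha, htl⟩
    rw [List.countP_cons]
    by_cases hta : t < a
    · have hone : (if (decide (t < a)) = true then 1 else 0) = 1 := by simp [hta]
      rw [hone]
      cases j with
      | zero => simp only [List.getElem_cons_zero]; omega
      | succ j =>
        have hj' : j < tl.length := by simpa using hj
        have := ih htl j hj'
        simp only [List.getElem_cons_succ]
        omega
    · have hz : tl.countP (fun x => decide (t < x)) = 0 := by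
        rw [List.countP_eq_zero]
        intro x hx
        simp only [decide_eq_true_eq]
        have := ha x hx
        omega
      have hzero : (if (decide (t < a)) = true then 1 else 0) = 0 := by simp [hta]
      rw [hzero, hz]
      cases j with
      | zero => simp only [List.getElem_cons_zero]; omega
      | succ j =>
        have hj' : j < tl.length := by simpa using hj
        have : tl[j] < a := ha _ (List.getElem_mem hj')
        simp only [List.getElem_cons_succ]
        omega

lemma all_false' {α} (p : α → Bool) (l : List α)
    (hdc : ∀ k (h : k + 1 < l.length), p (l[k+1]) = true → p (l[k]'(by omega)) = true)
    (h0 : ∀ (h : 0 < l.length), ¬ p (l[0]) = true) :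
    ∀ k (hk : k < l.length), ¬ p (l[k]) = true := by
  intro k
  induction k with
  | zero => exact fun hk => h0 hk
  | succ k ih => exact fun hk h' => ih (by omega) (hdc k hk h')

lemma countP_down {α} (p : α → Bool) (l : List α)
    (hdc : ∀ k (h : k + 1 < l.length), p (l[k+1]) = true → p (l[k]'(by omega)) = true)
    (t : ℕ) (ht : t < l.length) :
    t < l.countP p ↔ p (l[t]) = true := by
  induction l generalizing t with
  | nil => simp at ht
  | cons a tl ih =>
    rw [List.countP_cons]
    by_cases hpa : p a = true
    · cases t with
      | zero => simp [hpa]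
      | succ t =>
        have hdc' : ∀ k (h : k + 1 < tl.length), p (tl[k+1]) = true → p (tl[k]'(by omega)) = true := by
          intro k hk h'
          have hlen : (k+1) + 1 < (a :: tl).length := by simp; omega
          have := hdc (k+1) hlen (by simpa using h')
          simpa using this
        have ht' : t < tl.length := by simpa using ht
        have key := ih hdc' t ht'
        have hone : (if p a = true then 1 else 0) = 1 := by simp [hpa]
        rw [hone]
        simp only [List.getElem_cons_succ]
        rw [← key]
        omega
    · have key := all_false' p (a :: tl) hdc (fun _ => by simpa using hpa)
      have h1 : ¬ p ((a :: tl)[t]) = true := key t ht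
      have h2 : (a :: tl).countP p = 0 := by
        rw [List.countP_eq_zero]
        intro x hx
        obtain ⟨k, hk, rfl⟩ := List.getElem_of_mem hx
        exact key k hk
      rw [List.countP_cons] at h2
      simp only [h1, iff_false, Bool.false_eq_true]
      omega

lemma lam_anti {m : ℕ} {lam : ℕ → ℕ}
    (hdec : ∀ a, 1 ≤ a → a < m → lam (a + 1) < lam a)
    (hzero : ∀ a, m < a → lam a = 0) :
    ∀ a b, 1 ≤ a → a ≤ b → lam b ≤ lam a := by
  intro a b ha hab
  induction b, hab using Nat.le_induction with
  | base => exact le_refl _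
  | succ b hb ih =>
    by_cases hbm : b < m
    · exact le_trans (le_of_lt (hdec b (by omega) hbm)) ih
    · rw [hzero (b + 1) (by omega)]; omega

lemma pathOf_isPath (n m : ℕ) (lam : ℕ → ℕ) (hm : 1 ≤ m) (h1 : lam 1 = n)
    (hdec : ∀ a, 1 ≤ a → a < m → lam (a + 1) < lam a)
    (hpos : 0 < lam m)
    (hzero : ∀ a, m < a → lam a = 0)
    (mu : List ℕ)
    (hchain : mu.Chain' (· > ·)) (hposmu : ∀ x ∈ mu, 0 < x)
    (hbound : ∀ j, j < mu.length → mu.getD j 0 ≤ lam (j + 2)) :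
    IsNEPathIn {p : ℕ × ℕ | 1 ≤ p.1 ∧ p.1 ≤ m ∧ p.1 ≤ p.2 ∧ p.2 < p.1 + lam p.1}
      (mu.length + 1, mu.length + 1) (1, n) (pathOf n mu) := by
  have hpw : mu.Pairwise (· > ·) := List.isChain_iff_pairwise.mp hchain
  have hnodup : mu.Nodup := hpw.imp (fun h => ne_of_gt h)
  have hn1 : 1 ≤ n := by
    have := lam_anti hdec hzero 1 m (le_refl _) hm
    omega
  have hlen : (pathOf n mu).length = n := by simp [pathOf]
  have hget : ∀ t (ht : t < n), (pathOf n mu)[t]'(by omega) = posFn mu t := by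
    intro t ht
    simp [pathOf]
  -- parts are < n and ≤ lam (j+2) and > 0
  have hplt : ∀ j (hj : j < mu.length), 0 < mu[j] ∧ mu[j] ≤ lam (j + 2) ∧ mu[j] < n := by
    intro j hj
    have hb := hbound j hj
    rw [List.getD_eq_getElem mu 0 hj] at hb
    have hp0 : 0 < mu[j] := hposmu _ (List.getElem_mem hj)
    refine ⟨hp0, hb, ?_⟩
    by_cases hjm : j + 2 ≤ m
    · have h2 : lam (j + 2) ≤ lam 2 := lam_anti hdec hzero 2 (j+2) (by omega) (by omega)
      have h3 : lam 2 < lam 1 := hdec 1 (le_refl _) (by omega)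
      omega
    · have := hzero (j + 2) (by omega)
      omega
  refine ⟨?_, ?_, ?_, ?_⟩
  · -- Chain'
    show List.IsChain _ _
    rw [List.isChain_iff_getElem]
    intro t ht
    rw [hlen] at ht
    rw [hget t (by omega), hget (t+1) (by omega)]
    have hle : rowFn mu (t+1) ≤ rowFn mu t := by
      unfold rowFn
      have : mu.countP (fun x => decide (t+1 < x)) ≤ mu.countP (fun x => decide (t < x)) := by
        apply List.countP_mono_left
        intro x hx
        simp only [decide_eq_true_eq]
        omega
      omega
    have hge : rowFn mu t ≤ rowFn mu (t+1) + 1 := by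
      unfold rowFn
      have := countP_succ_le t mu hnodup
      omega
    unfold NEStep posFn
    rcases Nat.eq_or_lt_of_le hle with he | hlt
    · right; dsimp only; omega
    · left; dsimp only; omega
  · -- head?
    rw [List.head?_eq_getElem?]
    have h0n : 0 < (pathOf n mu).length := by omega
    rw [List.getElem?_eq_getElem h0n, hget 0 (by omega)]
    have : mu.countP (fun x => decide (0 < x)) = mu.length := by
      rw [List.countP_eq_length]
      intro a ha
      simp only [decide_eq_true_eq]
      exact hposmu a ha
    simp [posFn, rowFn, this]
  · -- getLast?
    rw [List.getLast?_eq_getElem?, hlen]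
    have hn1' : n - 1 < (pathOf n mu).length := by omega
    rw [List.getElem?_eq_getElem hn1', hget (n-1) (by omega)]
    have hz : mu.countP (fun x => decide (n - 1 < x)) = 0 := by
      rw [List.countP_eq_zero]
      intro a ha
      simp only [decide_eq_true_eq]
      obtain ⟨j, hj, rfl⟩ := List.getElem_of_mem ha
      have := hplt j hj
      omega
    simp only [posFn, rowFn, hz, Option.some.injEq, Prod.mk.injEq]
    exact ⟨trivial, by omega⟩
  · -- membership
    intro b hb
    simp only [pathOf, List.mem_map, List.mem_range] at hb
    obtain ⟨t, ht, rfl⟩ := hb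
    set c := mu.countP (fun x => decide (t < x)) with hc
    simp only [posFn, rowFn, Set.mem_setOf_eq, ← hc]
    rcases Nat.eq_zero_or_pos c with h0 | hcpos
    · rw [h0]
      refine ⟨by omega, by omega, by omega, ?_⟩
      rw [h1]
      omega
    · have hcle : c ≤ mu.length := List.countP_le_length
      have hj : c - 1 < mu.length := by omega
      have htlt : t < mu[c-1] := by
        have := (countP_lt_iff mu hpw (c-1) t hj).mp (by omega)
        exact this
      have hble := (hplt (c-1) hj).2.1
      have hcc : c - 1 + 2 = c + 1 := by omega
      rw [hcc] at hble
      have htlam : t < lam (c + 1) := by omega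
      have hcm : c + 1 ≤ m := by
        by_contra hcon
        have := hzero (c + 1) (by omega)
        omega
      exact ⟨by omega, by omega, by omega, by omega⟩

lemma extract_pathOf (n m : ℕ) (lam : ℕ → ℕ) (hm : 1 ≤ m) (h1 : lam 1 = n)
    (hdec : ∀ a, 1 ≤ a → a < m → lam (a + 1) < lam a)
    (hpos : 0 < lam m)
    (hzero : ∀ a, m < a → lam a = 0)
    (mu : List ℕ)
    (hchain : mu.Chain' (· > ·)) (hposmu : ∀ x ∈ mu, 0 < x)
    (hbound : ∀ j, j < mu.length → mu.getD j 0 ≤ lam (j + 2)) :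
    extract (pathOf n mu) = mu := by
  have hpw : mu.Pairwise (· > ·) := List.isChain_iff_pairwise.mp hchain
  obtain ⟨hc, hh, hl, hD⟩ := pathOf_isPath n m lam hm h1 hdec hpos hzero mu hchain hposmu hbound
  have hn1 : 1 ≤ n := by
    have := lam_anti hdec hzero 1 m (le_refl _) hm
    omega
  have hplt : ∀ j (hj : j < mu.length), mu[j] < n := by
    intro j hj
    have hb := hbound j hj
    rw [List.getD_eq_getElem mu 0 hj] at hb
    have hp0 : 0 < mu[j] := hposmu _ (List.getElem_mem hj)
    by_cases hjm : j + 2 ≤ m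
    · have h2 : lam (j + 2) ≤ lam 2 := lam_anti hdec hzero 2 (j+2) (by omega) (by omega)
      have h3 : lam 2 < lam 1 := hdec 1 (le_refl _) (by omega)
      omega
    · have := hzero (j + 2) (by omega)
      omega
  have hhd : (pathOf n mu).headD (1,1) = (mu.length + 1, mu.length + 1) := by
    rw [List.headD_eq_head?_getD, hh]
    rfl
  have hcnt : ∀ j (hj : j < mu.length),
      (pathOf n mu).countP (fun p => decide (j + 2 ≤ p.1)) = mu[j] := by
    intro j hj
    unfold pathOf
    rw [List.countP_map]
    have hcongr : ∀ t ∈ List.range n,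
        ((fun p : ℕ × ℕ => decide (j + 2 ≤ p.1)) ∘ posFn mu) t = true ↔
        (fun t => decide (t < mu[j])) t = true := by
      intro t _
      unfold posFn rowFn
      simp only [Function.comp, posFn, rowFn, decide_eq_true_eq]
      have := countP_lt_iff mu hpw j t hj
      omega
    rw [List.countP_congr hcongr, countP_range_lt]
    have := hplt j hj
    omega
  unfold extract
  rw [hhd]
  simp only [Nat.add_sub_cancel]
  apply List.ext_getElem
  · simp
  · intro k h1' h2'
    simp only [List.length_map, List.length_range] at h1'
    rw [List.getElem_map, List.getElem_range]
    exact hcnt k h1'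

lemma path_facts (n m : ℕ) (lam : ℕ → ℕ) (hm : 1 ≤ m) (h1 : lam 1 = n)
    (hdec : ∀ a, 1 ≤ a → a < m → lam (a + 1) < lam a)
    (hpos : 0 < lam m)
    (hzero : ∀ a, m < a → lam a = 0)
    (l : List (ℕ × ℕ)) (i : ℕ)
    (h : IsNEPathIn {p : ℕ × ℕ | 1 ≤ p.1 ∧ p.1 ≤ m ∧ p.1 ≤ p.2 ∧ p.2 < p.1 + lam p.1}
      (i, i) (1, n) l) :
    pathOf n (extract l) = l ∧ (extract l).Chain' (· > ·) ∧ (∀ x ∈ extract l, 0 < x) ∧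
      (∀ j, j < (extract l).length → (extract l).getD j 0 ≤ lam (j + 2)) := by
  obtain ⟨hc, hh, hl, hD⟩ := h
  have hne : l ≠ [] := by intro e; rw [e] at hh; simp at hh
  have hlen0 : 0 < l.length := List.length_pos_iff.mpr hne
  have h0 : l[0] = (i, i) := by
    rw [List.head?_eq_getElem?] at hh
    obtain ⟨_, he⟩ := List.getElem?_eq_some_iff.mp hh
    exact he
  have hlast : l[l.length - 1] = (1, n) := by
    rw [List.getLast?_eq_getElem?] at hl
    obtain ⟨_, he⟩ := List.getElem?_eq_some_iff.mp hl
    exact he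
  have hstep : ∀ k (hk : k + 1 < l.length), NEStep (l[k]'(by omega)) l[k+1] := by
    intro k hk
    have := List.isChain_iff_getElem.mp hc k (by omega)
    simpa [List.get_eq_getElem] using this
  have hdiag : ∀ t (ht : t < l.length), (l[t]).2 = (l[t]).1 + t := by
    intro t
    induction t with
    | zero => intro ht; rw [h0]; rfl
    | succ t ih =>
      intro ht
      have h1' := ih (by omega)
      have h2' := hstep t ht
      unfold NEStep at h2'
      omega
  have hlen : l.length = n := by
    have := hdiag (l.length - 1) (by omega)
    rw [hlast] at this
    simp only at this
    omega
  have hmem : ∀ t (ht : t < l.length),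
      1 ≤ (l[t]).1 ∧ (l[t]).1 ≤ m ∧ (l[t]).1 ≤ (l[t]).2 ∧ (l[t]).2 < (l[t]).1 + lam ((l[t]).1) :=
    fun t ht => hD _ (List.getElem_mem ht)
  have hmono : ∀ k (hk : k + 1 < l.length),
      (l[k+1]).1 ≤ (l[k]'(by omega)).1 ∧ (l[k]'(by omega)).1 ≤ (l[k+1]).1 + 1 := by
    intro k hk
    have := hstep k hk
    unfold NEStep at this
    omega
  have hanti : ∀ t (ht : t < l.length), (l[t]).1 ≤ i := by
    intro t
    induction t with
    | zero => intro ht; rw [h0]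
    | succ t ih =>
      intro ht
      have := hmono t ht
      have := ih (by omega)
      omega
  have hcnt : ∀ v t (ht : t < l.length),
      (t < l.countP (fun p => decide (v ≤ p.1)) ↔ v ≤ (l[t]).1) := by
    intro v t ht
    have := countP_down (fun p : ℕ × ℕ => decide (v ≤ p.1)) l ?_ t ht
    · simpa using this
    · intro k hk hp
      simp only [decide_eq_true_eq] at hp ⊢
      have := hmono k hk
      omega
  have hi1 : 1 ≤ i := by
    have := (hmem 0 hlen0).1
    rw [h0] at this
    exact this
  have hhd : l.headD (1,1) = (i,i) := by rw [List.headD_eq_head?_getD, hh]; rfl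
  have hex : extract l =
      (List.range (i-1)).map (fun j => l.countP (fun p => decide (j + 2 ≤ p.1))) := by
    simp [extract, List.headD_eq_head?_getD, hh]
  have hmulen : (extract l).length = i - 1 := by simp [hex]
  have hmuget : ∀ j (hj : j < i - 1),
      (extract l)[j]'(by omega) = l.countP (fun p => decide (j + 2 ≤ p.1)) := by
    intro j hj
    simp [hex]
  have hexist : ∀ v, 2 ≤ v → v ≤ i → ∃ s, ∃ _ : s + 1 < l.length, (l[s]'(by omega)).1 = v := by
    intro v hv2 hvi
    set c := l.countP (fun p => decide (v ≤ p.1)) with hcdef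
    have hc0 : 0 < c := (hcnt v 0 hlen0).mpr (by rw [h0]; exact hvi)
    have hcn : c ≤ l.length - 1 := by
      by_contra hcon
      push_neg at hcon
      have := (hcnt v (l.length - 1) (by omega)).mp (by omega)
      rw [hlast] at this
      simp only at this
      omega
    refine ⟨c - 1, by omega, ?_⟩
    have hub : v ≤ (l[c-1]'(by omega)).1 := (hcnt v (c-1) (by omega)).mp (by omega)
    have hnb : ¬ (v ≤ (l[c]'(by omega)).1) :=
      fun hcon => absurd ((hcnt v c (by omega)).mpr hcon) (by omega)
    have hm2 := hmono (c-1) (by omega)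
    have hcc : c - 1 + 1 = c := by omega
    simp only [hcc] at hm2
    omega
  have hposcnt : ∀ j, j < i - 1 → 0 < l.countP (fun p => decide (j + 2 ≤ p.1)) := by
    intro j hj
    exact (hcnt (j+2) 0 hlen0).mpr (by rw [h0]; simp; omega)
  have hchainmu : (extract l).Chain' (· > ·) := by
    show List.IsChain _ _
    rw [List.isChain_iff_getElem]
    intro j hj
    rw [hmulen] at hj
    rw [hmuget j (by omega), hmuget (j+1) (by omega)]
    obtain ⟨s, hs1, hs2⟩ := hexist (j+2) (by omega) (by omega)
    have hlt : s < l.countP (fun p => decide (j + 2 ≤ p.1)) :=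
      (hcnt (j+2) s (by omega)).mpr (by omega)
    have hge : ¬ (s < l.countP (fun p => decide (j + 1 + 2 ≤ p.1))) := by
      intro hcon
      have := (hcnt (j+1+2) s (by omega)).mp hcon
      omega
    omega
  have hposmu : ∀ x ∈ extract l, 0 < x := by
    intro x hx
    obtain ⟨j, hj, rfl⟩ := List.getElem_of_mem hx
    rw [hmulen] at hj
    rw [hmuget j hj]
    exact hposcnt j hj
  have hboundmu : ∀ j, j < (extract l).length → (extract l).getD j 0 ≤ lam (j + 2) := by
    intro j hj
    rw [List.getD_eq_getElem _ 0 hj, hmuget j (by omega : j < i - 1)]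
    · set c := l.countP (fun p => decide (j + 2 ≤ p.1)) with hcdef
      have hc0 : 0 < c := hposcnt j (by omega)
      have hcle : c ≤ l.length := List.countP_le_length
      have hs : j + 2 ≤ (l[c-1]'(by omega)).1 := (hcnt (j+2) (c-1) (by omega)).mp (by omega)
      have hmem' := hmem (c-1) (by omega)
      have hd := hdiag (c-1) (by omega)
      have h5 : c - 1 < lam ((l[c-1]'(by omega)).1) := by omega
      have h6 : lam ((l[c-1]'(by omega)).1) ≤ lam (j+2) :=
        lam_anti hdec hzero (j+2) _ (by omega) hs
      omega
  have hrow : ∀ t (ht : t < l.length), rowFn (extract l) t = (l[t]).1 := by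
    intro t ht
    unfold rowFn
    rw [hex, List.countP_map]
    have hr1 : 1 ≤ (l[t]).1 := (hmem t ht).1
    have hcongr : ∀ j ∈ List.range (i-1),
        ((fun x => decide (t < x)) ∘ (fun j => l.countP (fun p => decide (j + 2 ≤ p.1)))) j = true ↔
        (fun j => decide (j < (l[t]).1 - 1)) j = true := by
      intro j hjr
      simp only [Function.comp, decide_eq_true_eq]
      have hiff := hcnt (j+2) t ht
      omega
    rw [List.countP_congr hcongr, countP_range_lt]
    have := hanti t ht
    omega
  have heq : pathOf n (extract l) = l := by
    apply List.ext_getElem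
    · simp [pathOf, hlen]
    · intro t h1' h2'
      simp only [pathOf, List.length_map, List.length_range] at h1'
      simp only [pathOf, List.getElem_map, List.getElem_range]
      have hr := hrow t (by omega)
      have hd := hdiag t (by omega)
      rw [Prod.ext_iff]
      refine ⟨by simp [posFn, hr], by simp [posFn, hr]; omega⟩
  exact ⟨heq, hchainmu, hposmu, hboundmu⟩

/-- Let `λ₁ = n > λ₂ > … > λₘ > 0` be a partition with distinct parts, with shifted Ferrers
diagram `D` whose row `a` occupies the boxes `(a,b)` for `a ≤ b ≤ a + λₐ - 1`. Then the
maximal NE-paths of `D` are in bijection with the distinct-part partitions `μ` with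
`μⱼ ≤ λ_{j+1}` for all `j` (the subpartitions of `(λ₂, …, λₘ)` with distinct parts). -/
theorem stmt_19 (n m : ℕ) (lam : ℕ → ℕ) (hm : 1 ≤ m)
    (h1 : lam 1 = n)
    (hdec : ∀ a, 1 ≤ a → a < m → lam (a + 1) < lam a)
    (hpos : 0 < lam m)
    (hzero : ∀ a, m < a → lam a = 0) :
    Nonempty
      ({l : List (ℕ × ℕ) // ∃ i, IsNEPathIn
          {p : ℕ × ℕ | 1 ≤ p.1 ∧ p.1 ≤ m ∧ p.1 ≤ p.2 ∧ p.2 < p.1 + lam p.1}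
          (i, i) (1, n) l} ≃
       {mu : List ℕ // mu.Chain' (· > ·) ∧ (∀ x ∈ mu, 0 < x) ∧
          ∀ j, j < mu.length → mu.getD j 0 ≤ lam (j + 2)}) := by
  refine ⟨⟨
    fun lp => ⟨extract lp.1, ?_⟩,
    fun mup => ⟨pathOf n mup.1, ⟨mup.1.length + 1,
      pathOf_isPath n m lam hm h1 hdec hpos hzero mup.1 mup.2.1 mup.2.2.1 mup.2.2.2⟩⟩,
    ?_, ?_⟩⟩
  · obtain ⟨i, hi⟩ := lp.2
    obtain ⟨_, h2, h3, h4⟩ := path_facts n m lam hm h1 hdec hpos hzero lp.1 i hi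
    exact ⟨h2, h3, h4⟩
  · intro lp
    obtain ⟨i, hi⟩ := lp.2
    exact Subtype.ext (path_facts n m lam hm h1 hdec hpos hzero lp.1 i hi).1
  · intro mup
    exact Subtype.ext (extract_pathOf n m lam hm h1 hdec hpos hzero mup.1
      mup.2.1 mup.2.2.1 mup.2.2.2)
end
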